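/- arXiv:1807.05091 — 2 statements merged into one kernel-verified Lean document; each statement's English description precedes it below -/
import Mathlib

section
/- The path metric construction preserves products: for a family (X_i, ~_i)_{i ∈ I} of sets with reflexive symmetric relations, the path metric of the product relation ((x_i) ~ (x'_i) ⟺ ∀ i, x_i ~_i x'_i) on ∏_i X_i equals the supremum metric sup_i d_i(x_i, x'_i), where d_i is the path metric of ~_i. -/
open scoped ENNReal

/-- The path (pseudo-)metric induced by a relation. -/
noncomputable def pathDist {X : Type*} (r : X → X → Prop) (x y : X) : ℝ≥0∞ :=
  ⨅ (k : ℕ) (c : Fin (k + 1) → X) (_ : c 0 = x) (_ : c (Fin.last k) = y)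
    (_ : ∀ i : Fin k, r (c i.castSucc) (c i.succ)), (k : ℝ≥0∞)

lemma pathDist_le_of_chain {X : Type*} (r : X → X → Prop) {x y : X} {k : ℕ}
    (c : Fin (k + 1) → X) (h0 : c 0 = x) (h1 : c (Fin.last k) = y)
    (hc : ∀ i : Fin k, r (c i.castSucc) (c i.succ)) :
    pathDist r x y ≤ (k : ℝ≥0∞) := by
  unfold pathDist
  exact iInf_le_of_le k <| iInf_le_of_le c <| iInf_le_of_le h0 <| iInf_le_of_le h1 <|
    iInf_le _ hc

lemma exists_chain_of_lt {X : Type*} {r : X → X → Prop} {x y : X} {t : ℝ≥0∞}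
    (h : pathDist r x y < t) :
    ∃ k : ℕ, (k : ℝ≥0∞) < t ∧ ∃ c : Fin (k + 1) → X, c 0 = x ∧ c (Fin.last k) = y ∧
      ∀ i : Fin k, r (c i.castSucc) (c i.succ) := by
  unfold pathDist at h
  simp only [iInf_lt_iff] at h
  obtain ⟨k, c, h0, h1, hc, hk⟩ := h
  exact ⟨k, hk, c, h0, h1, hc⟩

lemma pad_step {X : Type*} {r : X → X → Prop} (hr : Reflexive r) {k m : ℕ}
    (c : Fin (k + 1) → X) (hc : ∀ i : Fin k, r (c i.castSucc) (c i.succ))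
    (j : Fin m) :
    r (c ⟨min j.val k, by omega⟩) (c ⟨min (j.val + 1) k, by omega⟩) := by
  rcases lt_or_ge j.val k with h | h
  · have e1 : (⟨min j.val k, by omega⟩ : Fin (k + 1)) = Fin.castSucc ⟨j.val, h⟩ := by
      ext; simp; omega
    have e2 : (⟨min (j.val + 1) k, by omega⟩ : Fin (k + 1)) = Fin.succ ⟨j.val, h⟩ := by
      ext; simp; omega
    rw [e1, e2]; exact hc _
  · have e1 : (⟨min j.val k, by omega⟩ : Fin (k + 1)) = (⟨k, by omega⟩ : Fin (k+1)) := by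
      ext; simp; omega
    have e2 : (⟨min (j.val + 1) k, by omega⟩ : Fin (k + 1)) = (⟨k, by omega⟩ : Fin (k+1)) := by
      ext; simp; omega
    rw [e1, e2]; exact hr _

/-- The path metric construction preserves (arbitrary) products: the path
metric of the product relation is the supremum of the coordinatewise path
metrics. -/
theorem pathDist_product {I : Type*} {X : I → Type*}
    (r : ∀ i, X i → X i → Prop)
    (hrefl : ∀ i, Reflexive (r i)) (hsymm : ∀ i, Symmetric (r i))
    (x x' : ∀ i, X i) :
    pathDist (fun a b => ∀ i, r i (a i) (b i)) x x' =
      ⨆ i, pathDist (r i) (x i) (x' i) := by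
  classical
  apply le_antisymm
  · -- pathDist product ≤ sup
    set S := ⨆ i, pathDist (r i) (x i) (x' i) with hS
    rcases eq_top_or_lt_top S with htop | hlt
    · rw [htop]; exact le_top
    -- every coordinate has a chain
    have hP : ∀ i, ∃ n : ℕ, ∃ c : Fin (n + 1) → X i, c 0 = x i ∧ c (Fin.last n) = x' i ∧
        ∀ j : Fin n, r i (c j.castSucc) (c j.succ) := by
      intro i
      have : pathDist (r i) (x i) (x' i) < ⊤ :=
        lt_of_le_of_lt (le_iSup (fun i => pathDist (r i) (x i) (x' i)) i) hlt
      obtain ⟨k, -, c, h0, h1, hc⟩ := exists_chain_of_lt this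
      exact ⟨k, c, h0, h1, hc⟩
    -- minimal chain length per coordinate
    set k : ∀ i, ℕ := fun i => Nat.find (hP i) with hk
    have hkchain : ∀ i, ∃ c : Fin (k i + 1) → X i, c 0 = x i ∧ c (Fin.last (k i)) = x' i ∧
        ∀ j : Fin (k i), r i (c j.castSucc) (c j.succ) := fun i => Nat.find_spec (hP i)
    have hkle : ∀ i, (k i : ℝ≥0∞) ≤ S := by
      intro i
      refine le_trans ?_ (le_iSup (fun i => pathDist (r i) (x i) (x' i)) i)
      unfold pathDist
      refine le_iInf fun n => le_iInf fun c => le_iInf fun h0 => le_iInf fun h1 =>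
        le_iInf fun hc => ?_
      exact_mod_cast Nat.cast_le.mpr (Nat.find_min' (hP i) ⟨c, h0, h1, hc⟩)
    -- uniform bound
    obtain ⟨n0, hn0⟩ := ENNReal.exists_nat_gt hlt.ne
    have hbdd : ∃ n : ℕ, ∀ i, k i ≤ n := by
      refine ⟨n0, fun i => ?_⟩
      exact_mod_cast (hkle i).trans_lt hn0 |>.le
    set m : ℕ := Nat.find hbdd with hm
    have hmk : ∀ i, k i ≤ m := Nat.find_spec hbdd
    have hmS : (m : ℝ≥0∞) ≤ S := by
      rcases Nat.eq_zero_or_pos m with h0 | h0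
      · simp [h0]
      · have := Nat.find_min hbdd (m := m - 1) (by omega)
        push_neg at this
        obtain ⟨i, hi⟩ := this
        have : m ≤ k i := by omega
        exact le_trans (Nat.cast_le.mpr this) (hkle i)
    -- build the product chain of length m
    choose c hc0 hc1 hcs using hkchain
    set C : Fin (m + 1) → ∀ i, X i := fun j i => c i ⟨min j.val (k i), Nat.lt_succ_of_le (Nat.min_le_right _ _)⟩ with hC
    refine le_trans (pathDist_le_of_chain _ C ?_ ?_ ?_) hmS
    · funext i
      have e : (⟨min (0 : Fin (m+1)).val (k i), by omega⟩ : Fin (k i + 1)) = 0 := by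
        ext; simp
      rw [hC]; simp only; rw [e, hc0]
    · funext i
      have hki := hmk i
      have e : (⟨min (Fin.last m).val (k i), Nat.lt_succ_of_le (Nat.min_le_right _ _)⟩ :
          Fin (k i + 1)) = Fin.last (k i) := by
        ext; simp [Fin.last]; omega
      rw [hC]; simp only; rw [e]  -- wrong? need min m (k i) = k i
      exact hc1 i
    · intro j i
      simp only [hC, Fin.coe_castSucc, Fin.val_succ]
      exact pad_step (hrefl i) (c i) (hcs i) j
  · -- sup ≤ pathDist product
    refine iSup_le fun i => ?_
    unfold pathDist
    refine le_iInf fun n => le_iInf fun c => le_iInf fun h0 => le_iInf fun h1 =>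
      le_iInf fun hc => ?_
    refine pathDist_le_of_chain (r i) (fun j => c j i) ?_ ?_ ?_
    · exact congrFun h0 i
    · exact congrFun h1 i
    · exact fun j => hc j i
end

section
/- Sequential composition of (ε, δ)-differential privacy for discrete distributions: let μ, ν ∈ D(X) satisfy the (ε, δ)-indistinguishability relation (μ(S) ≤ e^ε ν(S) + δ and ν(S) ≤ e^ε μ(S) + δ for all S ⊆ X), and let f, g : X → D(Y) be such that f(x) and g(x) are (ε', δ')-indistinguishable for every x ∈ X. Then the Kleisli extensions f†μ and g†ν are (ε + ε', δ + δ')-indistinguishable. -/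
open scoped ENNReal

/-- The measure of a set under a discrete distribution. -/
noncomputable def pmfSet {X : Type*} (μ : PMF X) (S : Set X) : ℝ≥0∞ :=
  ∑' x : S, μ x

/-- `(ε,δ)`-indistinguishability of two discrete probability distributions. -/
def DPRel {X : Type*} (ε δ : ℝ) (μ ν : PMF X) : Prop :=
  ∀ S : Set X,
    pmfSet μ S ≤ ENNReal.ofReal (Real.exp ε) * pmfSet ν S + ENNReal.ofReal δ ∧
    pmfSet ν S ≤ ENNReal.ofReal (Real.exp ε) * pmfSet μ S + ENNReal.ofReal δ

/-!
If `μ(S) ≤ E ν(S) + D` for all `S`, then testing against the set `{x | E ν x < μ x}` shows that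
the excess mass `∑ₓ (μ x - E ν x)⁺` is at most `D`. Hence `∑ₓ μ x φ x ≤ E ∑ₓ ν x φ x + D` for every
test function `φ` with values in `[0, 1]`. Applied to `φ x = min 1 (E' (g x)(T))`, which bounds
`(f x)(T)` up to `D'`, this gives `(f†μ)(T) ≤ E E' (g†ν)(T) + D + D'`.
-/

section

variable {X Y : Type*}

lemma pmfSet_le_one (μ : PMF X) (S : Set X) : pmfSet μ S ≤ 1 :=
  (ENNReal.tsum_comp_le_tsum_of_injective Subtype.val_injective μ).trans_eq μ.tsum_coe

lemma pmfSet_bind (μ : PMF X) (f : X → PMF Y) (T : Set Y) :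
    pmfSet (μ.bind f) T = ∑' x, μ x * pmfSet (f x) T := by
  simp only [pmfSet, PMF.bind_apply]
  rw [ENNReal.tsum_comm]
  exact tsum_congr fun x => ENNReal.tsum_mul_left

variable {μ ν : PMF X} {E D : ℝ≥0∞}

lemma tsum_tsub_le_of_forall_pmfSet_le (hE : E ≠ ∞)
    (h : ∀ S : Set X, pmfSet μ S ≤ E * pmfSet ν S + D) :
    ∑' x, (μ x - E * ν x) ≤ D := by
  set S : Set X := {x | E * ν x < μ x}
  have h_supp : Function.support (fun x => μ x - E * ν x) ⊆ S := fun x hx =>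
    lt_of_not_ge fun hle => hx (tsub_eq_zero_of_le hle)
  have h_fin : E * pmfSet ν S ≠ ∞ :=
    ENNReal.mul_ne_top hE (ne_top_of_le_ne_top ENNReal.one_ne_top (pmfSet_le_one ν S))
  rw [← tsum_subtype_eq_of_support_subset h_supp]
  refine ENNReal.le_of_add_le_add_right h_fin (le_of_eq_of_le ?_ ((h S).trans_eq (add_comm _ _)))
  rw [pmfSet, ← ENNReal.tsum_mul_left, ← ENNReal.tsum_add, pmfSet]
  exact tsum_congr fun x => tsub_add_cancel_of_le (le_of_lt x.2)

lemma tsum_mul_le_of_forall_pmfSet_le (hE : E ≠ ∞)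
    (h : ∀ S : Set X, pmfSet μ S ≤ E * pmfSet ν S + D) {φ : X → ℝ≥0∞} (hφ : ∀ x, φ x ≤ 1) :
    ∑' x, μ x * φ x ≤ E * ∑' x, ν x * φ x + D :=
  calc ∑' x, μ x * φ x
      ≤ ∑' x, (E * (ν x * φ x) + (μ x - E * ν x) * φ x) := by
        refine ENNReal.tsum_le_tsum fun x => ?_
        rw [← mul_assoc, ← add_mul]
        exact mul_le_mul_left le_add_tsub _
    _ ≤ E * ∑' x, ν x * φ x + ∑' x, (μ x - E * ν x) := by
        rw [ENNReal.tsum_add, ENNReal.tsum_mul_left]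
        gcongr with x
        exact mul_le_of_le_one_right' (hφ x)
    _ ≤ E * ∑' x, ν x * φ x + D := by
        gcongr
        exact tsum_tsub_le_of_forall_pmfSet_le hE h

lemma pmfSet_bind_le_of_forall_pmfSet_le {E' D' : ℝ≥0∞} (hE : E ≠ ∞)
    (hμν : ∀ S : Set X, pmfSet μ S ≤ E * pmfSet ν S + D) {f g : X → PMF Y} {T : Set Y}
    (hfg : ∀ x, pmfSet (f x) T ≤ E' * pmfSet (g x) T + D') :
    pmfSet (μ.bind f) T ≤ E * E' * pmfSet (ν.bind g) T + (D + D') := by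
  set φ : X → ℝ≥0∞ := fun x => min 1 (E' * pmfSet (g x) T)
  have hf : ∀ x, pmfSet (f x) T ≤ φ x + D' := fun x =>
    calc pmfSet (f x) T ≤ min (1 + D') (E' * pmfSet (g x) T + D') :=
          le_min ((pmfSet_le_one _ _).trans le_self_add) (hfg x)
      _ = φ x + D' := min_add_add_right _ _ _
  rw [pmfSet_bind, pmfSet_bind]
  calc ∑' x, μ x * pmfSet (f x) T
      ≤ ∑' x, μ x * φ x + ∑' x, μ x * D' := by
        rw [← ENNReal.tsum_add]
        exact ENNReal.tsum_le_tsum fun x => (mul_le_mul_right (hf x) _).trans_eq (mul_add _ _ _)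
    _ ≤ E * ∑' x, ν x * (E' * pmfSet (g x) T) + D + D' := by
        rw [ENNReal.tsum_mul_right, μ.tsum_coe, one_mul]
        gcongr
        refine (tsum_mul_le_of_forall_pmfSet_le hE hμν fun x => min_le_left _ _).trans ?_
        gcongr with x
        exact min_le_right _ _
    _ = E * E' * ∑' x, ν x * pmfSet (g x) T + (D + D') := by
        simp only [mul_left_comm (ν _) E', ENNReal.tsum_mul_left, mul_assoc, add_assoc]

end

theorem DPRel_seq_comp_general {X Y : Type*} (ε δ ε' δ' : ℝ)
    (hδ : 0 ≤ δ) (hδ' : 0 ≤ δ')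
    (μ ν : PMF X) (f g : X → PMF Y)
    (hμν : DPRel ε δ μ ν) (hfg : ∀ x : X, DPRel ε' δ' (f x) (g x)) :
    DPRel (ε + ε') (δ + δ') (μ.bind f) (ν.bind g) := by
  intro T
  rw [Real.exp_add, ENNReal.ofReal_mul (Real.exp_nonneg ε), ENNReal.ofReal_add hδ hδ']
  exact ⟨pmfSet_bind_le_of_forall_pmfSet_le ENNReal.ofReal_ne_top (fun S => (hμν S).1)
      fun x => (hfg x T).1,
    pmfSet_bind_le_of_forall_pmfSet_le ENNReal.ofReal_ne_top (fun S => (hμν S).2)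
      fun x => (hfg x T).2⟩

/-- Sequential composition of `(ε,δ)`-differential privacy. -/
theorem DPRel_seq_comp {X Y : Type*} (ε δ ε' δ' : ℝ)
    (hε : 0 ≤ ε) (hδ : 0 ≤ δ) (hε' : 0 ≤ ε') (hδ' : 0 ≤ δ')
    (μ ν : PMF X) (f g : X → PMF Y)
    (hμν : DPRel ε δ μ ν) (hfg : ∀ x : X, DPRel ε' δ' (f x) (g x)) :
    DPRel (ε + ε') (δ + δ') (μ.bind f) (ν.bind g) :=
  DPRel_seq_comp_general ε δ ε' δ' hδ hδ' μ ν f g hμν hfg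
end
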